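/- Let T be the integral operator on H_w with kernel q, i.e., Tf(x) = ∫₀^∞ q(x,y) f'(y) dy with domain the set of f ∈ H_w for which this integral is absolutely convergent for all x and defines an element of H_w. If q(x,·)/√w ∈ L²(ℝ≥0) for every x ≥ 0, then T is a closed linear operator. -/

import Mathlib

open MeasureTheory Set Filter

noncomputable section

/-- Inner product on the Filipović space `H_w`, for functions `g, h` with chosen
(weak) derivatives `g', h'`:  `⟨g,h⟩_w = g(0)h(0) + ∫₀^∞ w g' h'`. -/
def wInner (w g g' h h' : ℝ → ℝ) : ℝ :=
  g 0 * h 0 + ∫ x in Ioi (0:ℝ), w x * g' x * h' x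

/-- Norm on the Filipović space `H_w`. -/
def wNorm (w g g' : ℝ → ℝ) : ℝ := Real.sqrt (wInner w g g' g g')

/-- `w : ℝ≥0 → [1,∞)` continuous, increasing, with `w 0 = 1`. -/
structure IsWeight (w : ℝ → ℝ) : Prop where
  cont : ContinuousOn w (Ici 0)
  mono : MonotoneOn w (Ici 0)
  one_le : ∀ x ∈ Ici (0:ℝ), 1 ≤ w x
  at_zero : w 0 = 1

/-- `g ∈ H_w` with derivative `g'`: `g` is absolutely continuous on `[0,∞)` with
a.e. derivative `g'`, and `∫₀^∞ w (g')² < ∞`. -/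
def MemHw (w g g' : ℝ → ℝ) : Prop :=
  (∀ x ∈ Ici (0:ℝ), g x = g 0 + ∫ t in Ioc (0:ℝ) x, g' t) ∧
  (∀ x ∈ Ici (0:ℝ), IntegrableOn g' (Ioc 0 x)) ∧
  IntegrableOn (fun x => w x * g' x ^ 2) (Ioi 0)

/-- The reproducing kernel `h_x(y) = 1 + ∫₀^{min(x,y)} 1/w(s) ds`. -/
def hker (w : ℝ → ℝ) (x y : ℝ) : ℝ := 1 + ∫ s in Ioc (0:ℝ) (min x y), 1 / w s

/-- Derivative of `h_x`. -/
def hker' (w : ℝ → ℝ) (x : ℝ) : ℝ → ℝ := (Iic x).indicator (fun s => 1 / w s)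



lemma myIntMul (μ : Measure ℝ) (u v : ℝ → ℝ) (hu : MemLp u 2 μ) (hv : MemLp v 2 μ) :
    Integrable (fun y => u y * v y) μ := by
  rw [← memLp_one_iff_integrable]
  refine (MemLp.smul hv hu : MemLp (u • v) 1 μ)

lemma myCS (μ : Measure ℝ) (u v : ℝ → ℝ) (hu : MemLp u 2 μ) (hv : MemLp v 2 μ) :
    ∫ y, |u y * v y| ∂μ ≤ Real.sqrt (∫ y, u y ^ 2 ∂μ) * Real.sqrt (∫ y, v y ^ 2 ∂μ) := by
  have hpq : (2:ℝ).HolderConjugate 2 := Real.HolderConjugate.two_two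
  have h2 : ENNReal.ofReal (2:ℝ) = 2 := by norm_num
  have := integral_mul_le_Lp_mul_Lq_of_nonneg (μ := μ) hpq
    (f := fun y => |u y|) (g := fun y => |v y|)
    (Eventually.of_forall fun y => abs_nonneg _) (Eventually.of_forall fun y => abs_nonneg _)
    (h2 ▸ hu.abs) (h2 ▸ hv.abs)
  calc ∫ y, |u y * v y| ∂μ = ∫ y, |u y| * |v y| ∂μ := by simp [abs_mul]
    _ ≤ (∫ y, |u y| ^ (2:ℝ) ∂μ) ^ (1/2 : ℝ) * (∫ y, |v y| ^ (2:ℝ) ∂μ) ^ (1/2 : ℝ) := this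
    _ = Real.sqrt (∫ y, u y ^ 2 ∂μ) * Real.sqrt (∫ y, v y ^ 2 ∂μ) := by
        rw [← Real.sqrt_eq_rpow, ← Real.sqrt_eq_rpow]
        have habs : ∀ a : ℝ, |a| ^ (2:ℝ) = a ^ 2 := fun a => by
          rw [show (2:ℝ) = ((2:ℕ):ℝ) by norm_num, Real.rpow_natCast, sq_abs]
        congr 2 <;> exact integral_congr_ae (Eventually.of_forall fun y => habs _)

lemma MemHw.aesm {w g g' : ℝ → ℝ} (hg : MemHw w g g') :
    AEStronglyMeasurable g' (volume.restrict (Ioi (0:ℝ))) := by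
  have : Ioi (0:ℝ) = ⋃ n : ℕ, Ioc (0:ℝ) n := by
    ext y; simp only [mem_Ioi, mem_iUnion, mem_Ioc]
    exact ⟨fun hy => (exists_nat_ge y).imp fun n hn => ⟨hy, hn⟩, fun ⟨n, hn, _⟩ => hn⟩
  rw [this, aestronglyMeasurable_iUnion_iff]
  exact fun n => (hg.2.1 n (mem_Ici.2 n.cast_nonneg)).aestronglyMeasurable

lemma IsWeight.aesm_sqrt {w : ℝ → ℝ} (hw : IsWeight w) :
    AEStronglyMeasurable (fun y => Real.sqrt (w y)) (volume.restrict (Ioi (0:ℝ))) := by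
  have h1 : AEMeasurable w (volume.restrict (Ici (0:ℝ))) :=
    hw.cont.aemeasurable measurableSet_Ici
  have h2 : AEMeasurable w (volume.restrict (Ioi (0:ℝ))) :=
    h1.mono_measure (Measure.restrict_mono Ioi_subset_Ici_self le_rfl)
  exact ((Real.continuous_sqrt.measurable.comp_aemeasurable h2)).aestronglyMeasurable

lemma MemHw.memLp_sqrt {w g g' : ℝ → ℝ} (hw : IsWeight w) (hg : MemHw w g g') :
    MemLp (fun y => Real.sqrt (w y) * g' y) 2 (volume.restrict (Ioi (0:ℝ))) := by
  have hm : AEStronglyMeasurable (fun y => Real.sqrt (w y) * g' y)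
      (volume.restrict (Ioi (0:ℝ))) := hw.aesm_sqrt.mul hg.aesm
  rw [memLp_two_iff_integrable_sq hm]
  refine hg.2.2.congr ?_
  refine ((ae_restrict_iff' measurableSet_Ioi).2 (Eventually.of_forall fun y hy => ?_))
  have hwy : 0 ≤ w y := le_trans zero_le_one (hw.one_le y (mem_Ici.2 (le_of_lt hy)))
  simp only [mul_pow, Real.sq_sqrt hwy]

lemma MemHw.sub {w : ℝ → ℝ} (hw : IsWeight w) {g g' k k' : ℝ → ℝ} (hg : MemHw w g g') (hk : MemHw w k k') :
    MemHw w (fun x => g x - k x) (fun x => g' x - k' x) := by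
  refine ⟨fun x hx => ?_, fun x hx => (hg.2.1 x hx).sub (hk.2.1 x hx), ?_⟩
  · show g x - k x = _
    rw [integral_sub (hg.2.1 x hx) (hk.2.1 x hx)]
    have e1 := hg.1 x hx; have e2 := hk.1 x hx
    simp only []
    linarith
  · have hb : IntegrableOn (fun x => 2 * (w x * g' x ^ 2) + 2 * (w x * k' x ^ 2)) (Ioi 0) :=
      ((hg.2.2.const_mul 2).add (hk.2.2.const_mul 2))
    have hwm : AEMeasurable w (volume.restrict (Ioi (0:ℝ))) :=
      (hw.cont.aemeasurable measurableSet_Ici).mono_measure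
        (Measure.restrict_mono Ioi_subset_Ici_self le_rfl)
    refine Integrable.mono' hb
      (hwm.aestronglyMeasurable.mul (((hg.aesm.sub hk.aesm)).mul (hg.aesm.sub hk.aesm)) |>.congr ?_) ?_
    · exact Eventually.of_forall fun y => by simp only [Pi.mul_apply, Pi.sub_apply]; ring
    · refine (ae_restrict_iff' measurableSet_Ioi).2 (Eventually.of_forall fun y hy => ?_)
      have hwy : 0 ≤ w y := le_trans zero_le_one (hw.one_le y (mem_Ici.2 (le_of_lt hy)))
      have h1 : (g' y - k' y) ^ 2 ≤ 2 * g' y ^ 2 + 2 * k' y ^ 2 := by nlinarith [sq_nonneg (g' y + k' y)]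
      rw [Real.norm_eq_abs, abs_of_nonneg (by positivity)]
      calc w y * (g' y - k' y) ^ 2 ≤ w y * (2 * g' y ^ 2 + 2 * k' y ^ 2) :=
            mul_le_mul_of_nonneg_left h1 hwy
        _ = 2 * (w y * g' y ^ 2) + 2 * (w y * k' y ^ 2) := by ring

lemma MemHw.inner_eq {w g g' : ℝ → ℝ} :
    wInner w g g' g g' = g 0 ^ 2 + ∫ x in Ioi (0:ℝ), w x * g' x ^ 2 := by
  unfold wInner
  congr 1
  · ring
  · exact integral_congr_ae (Eventually.of_forall fun y => by ring)

lemma intJ_nonneg {w g' : ℝ → ℝ} (hw : IsWeight w) :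
    0 ≤ ∫ x in Ioi (0:ℝ), w x * g' x ^ 2 :=
  setIntegral_nonneg measurableSet_Ioi fun y hy =>
    mul_nonneg (le_trans zero_le_one (hw.one_le y (mem_Ici.2 (le_of_lt hy)))) (sq_nonneg _)

lemma sqrtJ_le_wNorm {w g g' : ℝ → ℝ} (hw : IsWeight w) :
    Real.sqrt (∫ x in Ioi (0:ℝ), w x * g' x ^ 2) ≤ wNorm w g g' := by
  unfold wNorm
  rw [MemHw.inner_eq]
  exact Real.sqrt_le_sqrt (by nlinarith [sq_nonneg (g 0)])

lemma abs_eval0_le_wNorm {w g g' : ℝ → ℝ} (hw : IsWeight w) : |g 0| ≤ wNorm w g g' := by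
  unfold wNorm
  rw [MemHw.inner_eq, ← Real.sqrt_sq_eq_abs]
  exact Real.sqrt_le_sqrt (by nlinarith [intJ_nonneg (g' := g') hw])

lemma MemHw.eval_bound {w g g' : ℝ → ℝ} (hw : IsWeight w) (hg : MemHw w g g')
    {x : ℝ} (hx : 0 ≤ x) : |g x| ≤ (1 + Real.sqrt x) * wNorm w g g' := by
  set J := ∫ y in Ioi (0:ℝ), w y * g' y ^ 2 with hJ
  have hJ0 : 0 ≤ J := intJ_nonneg hw
  have hfin : IsFiniteMeasure (volume.restrict (Ioc (0:ℝ) x)) :=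
    ⟨by rw [Measure.restrict_apply_univ]; exact measure_Ioc_lt_top⟩
  set v : ℝ → ℝ := fun y => Real.sqrt (w y) * g' y with hv
  have hv2 : MemLp v 2 (volume.restrict (Ioc (0:ℝ) x)) :=
    (hg.memLp_sqrt hw).mono_measure (Measure.restrict_mono Ioc_subset_Ioi_self le_rfl)
  have hone : MemLp (fun _ : ℝ => (1:ℝ)) 2 (volume.restrict (Ioc (0:ℝ) x)) :=
    memLp_const 1
  have hCS := myCS _ _ _ hone hv2
  -- ∫ 1^2 = x
  have hvol : ∫ _ in Ioc (0:ℝ) x, ((1:ℝ))^2 = x := by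
    simp [Real.volume_Ioc, ENNReal.toReal_ofReal hx, hx]
  -- ∫ v^2 ≤ J
  have hvJ : ∫ y in Ioc (0:ℝ) x, v y ^ 2 ≤ J := by
    have he : ∫ y in Ioc (0:ℝ) x, v y ^ 2 = ∫ y in Ioc (0:ℝ) x, w y * g' y ^ 2 := by
      refine setIntegral_congr_fun measurableSet_Ioc fun y hy => ?_
      have hwy : 0 ≤ w y := le_trans zero_le_one (hw.one_le y (mem_Ici.2 (le_of_lt hy.1)))
      simp [hv, mul_pow, Real.sq_sqrt hwy]
    rw [he]
    refine setIntegral_mono_set hg.2.2 ?_ (HasSubset.Subset.eventuallyLE Ioc_subset_Ioi_self)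
    exact (ae_restrict_iff' measurableSet_Ioi).2 (Eventually.of_forall fun y hy =>
      mul_nonneg (le_trans zero_le_one (hw.one_le y (mem_Ici.2 (le_of_lt hy)))) (sq_nonneg _))
  -- ∫ |g'| ≤ ∫ |1 * v|
  have hintv : IntegrableOn (fun y => |(1:ℝ) * v y|) (Ioc (0:ℝ) x) := by
    have : Integrable v (volume.restrict (Ioc (0:ℝ) x)) :=
      hv2.integrable (by norm_num)
    simpa [IntegrableOn] using this.abs
  have hmono : ∫ y in Ioc (0:ℝ) x, |g' y| ≤ ∫ y in Ioc (0:ℝ) x, |(1:ℝ) * v y| := by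
    refine setIntegral_mono_on (hg.2.1 x hx).abs hintv measurableSet_Ioc fun y hy => ?_
    have hw1 : 1 ≤ Real.sqrt (w y) :=
      Real.one_le_sqrt.2 (hw.one_le y (mem_Ici.2 (le_of_lt hy.1)))
    rw [one_mul, hv, abs_mul, abs_of_nonneg (le_trans zero_le_one hw1)]
    nlinarith [abs_nonneg (g' y)]
  have key : |∫ t in Ioc (0:ℝ) x, g' t| ≤ Real.sqrt x * Real.sqrt J := by
    calc |∫ t in Ioc (0:ℝ) x, g' t| ≤ ∫ t in Ioc (0:ℝ) x, |g' t| :=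
          by simpa [Real.norm_eq_abs] using
            norm_integral_le_integral_norm (μ := volume.restrict (Ioc (0:ℝ) x)) g'
      _ ≤ ∫ y in Ioc (0:ℝ) x, |(1:ℝ) * v y| := hmono
      _ ≤ Real.sqrt (∫ _ in Ioc (0:ℝ) x, ((1:ℝ))^2) * Real.sqrt (∫ y in Ioc (0:ℝ) x, v y ^ 2) := hCS
      _ ≤ Real.sqrt x * Real.sqrt J := by
          rw [hvol]
          exact mul_le_mul_of_nonneg_left (Real.sqrt_le_sqrt hvJ) (Real.sqrt_nonneg x)
  have hbound := hg.1 x hx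
  calc |g x| = |g 0 + ∫ t in Ioc (0:ℝ) x, g' t| := by rw [hbound]
    _ ≤ |g 0| + |∫ t in Ioc (0:ℝ) x, g' t| := abs_add_le _ _
    _ ≤ wNorm w g g' + Real.sqrt x * Real.sqrt J := add_le_add (abs_eval0_le_wNorm hw) key
    _ ≤ wNorm w g g' + Real.sqrt x * wNorm w g g' := by
        have := sqrtJ_le_wNorm (g := g) (g' := g') hw
        nlinarith [Real.sqrt_nonneg x]
    _ = (1 + Real.sqrt x) * wNorm w g g' := by ring



/-- if `q(x,·)/√w ∈ L²(ℝ≥0)` for every `x ≥ 0`, the integral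
operator `Tf(x) = ∫₀^∞ q(x,y) f'(y) dy` (with its natural domain) is closed:
if `fₙ` is in the domain, `fₙ → f` and `Tfₙ → h` in `H_w`, then `f` is in the
domain and `Tf = h` on `[0,∞)`. -/
theorem stmt11 (w : ℝ → ℝ) (hw : IsWeight w)
    (q : ℝ → ℝ → ℝ) (hq : Measurable (Function.uncurry q))
    (hq2 : ∀ x ∈ Ici (0:ℝ),
      MemLp (fun y => q x y / Real.sqrt (w y)) 2 (volume.restrict (Ioi (0:ℝ))))
    (fn fn' : ℕ → ℝ → ℝ) (Tfn' : ℕ → ℝ → ℝ) (f f' h h' : ℝ → ℝ)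
    (hfn : ∀ n, MemHw w (fn n) (fn' n))
    (hf : MemHw w f f') (hh : MemHw w h h')
    (hdom : ∀ n, ∀ x ∈ Ici (0:ℝ),
      Integrable (fun y => q x y * fn' n y) (volume.restrict (Ioi (0:ℝ))))
    (hTfn : ∀ n, MemHw w (fun x => ∫ y in Ioi (0:ℝ), q x y * fn' n y) (Tfn' n))
    (hconv : Tendsto (fun n =>
      wNorm w (fun x => fn n x - f x) (fun x => fn' n x - f' x)) atTop (nhds 0))
    (hconv' : Tendsto (fun n =>
      wNorm w (fun x => (∫ y in Ioi (0:ℝ), q x y * fn' n y) - h x)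
        (fun x => Tfn' n x - h' x)) atTop (nhds 0)) :
    (∀ x ∈ Ici (0:ℝ), Integrable (fun y => q x y * f' y) (volume.restrict (Ioi (0:ℝ)))) ∧
    (∀ x ∈ Ici (0:ℝ), (∫ y in Ioi (0:ℝ), q x y * f' y) = h x) := by
  have hsqrt_pos : ∀ y ∈ Ioi (0:ℝ), (0:ℝ) < Real.sqrt (w y) := fun y hy =>
    Real.sqrt_pos.2 (lt_of_lt_of_le one_pos (hw.one_le y (mem_Ici.2 (le_of_lt hy))))
  have part1 : ∀ x ∈ Ici (0:ℝ),
      Integrable (fun y => q x y * f' y) (volume.restrict (Ioi (0:ℝ))) := by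
    intro x hx
    refine (myIntMul _ _ _ (hq2 x hx) (hf.memLp_sqrt hw)).congr ?_
    refine (ae_restrict_iff' measurableSet_Ioi).2 (Eventually.of_forall fun y hy => ?_)
    have := (hsqrt_pos y hy).ne'
    field_simp
  refine ⟨part1, fun x hx => ?_⟩
  set L : ℝ := ∫ y in Ioi (0:ℝ), q x y * f' y with hL
  set c : ℕ → ℝ := fun n => ∫ y in Ioi (0:ℝ), q x y * fn' n y with hc
  set u : ℝ → ℝ := fun y => q x y / Real.sqrt (w y) with hu
  set Cq : ℝ := Real.sqrt (∫ y in Ioi (0:ℝ), u y ^ 2) with hCq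
  have hCq0 : 0 ≤ Cq := Real.sqrt_nonneg _
  -- claim A : c → L
  have hA : Tendsto c atTop (nhds L) := by
    have hbnd : ∀ n, ‖c n - L‖ ≤
        Cq * wNorm w (fun x => fn n x - f x) (fun x => fn' n x - f' x) := by
      intro n
      set vn : ℝ → ℝ := fun y => Real.sqrt (w y) * (fn' n y - f' y) with hvn
      have hsubHw : MemHw w (fun x => fn n x - f x) (fun x => fn' n x - f' x) :=
        (hfn n).sub hw hf
      have hvn2 : MemLp vn 2 (volume.restrict (Ioi (0:ℝ))) := hsubHw.memLp_sqrt hw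
      have hdiff : c n - L = ∫ y in Ioi (0:ℝ), q x y * (fn' n y - f' y) := by
        rw [hc, hL, ← integral_sub (hdom n x hx) (part1 x hx)]
        exact integral_congr_ae (Eventually.of_forall fun y => by ring)
      have heq : ∫ y in Ioi (0:ℝ), |q x y * (fn' n y - f' y)| =
          ∫ y in Ioi (0:ℝ), |u y * vn y| := by
        refine setIntegral_congr_fun measurableSet_Ioi fun y hy => ?_
        have hne := (hsqrt_pos y hy).ne'
        congr 1
        simp only [hu, hvn]; field_simp
      have hint2 : ∫ y in Ioi (0:ℝ), vn y ^ 2 =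
          ∫ y in Ioi (0:ℝ), w y * (fn' n y - f' y) ^ 2 := by
        refine setIntegral_congr_fun measurableSet_Ioi fun y hy => ?_
        have hwy : (0:ℝ) ≤ w y := le_trans zero_le_one (hw.one_le y (mem_Ici.2 (le_of_lt hy)))
        simp [hvn, mul_pow, Real.sq_sqrt hwy]
      calc ‖c n - L‖ = |∫ y in Ioi (0:ℝ), q x y * (fn' n y - f' y)| := by
            rw [hdiff]; rfl
        _ ≤ ∫ y in Ioi (0:ℝ), |q x y * (fn' n y - f' y)| := by
            simpa only [Real.norm_eq_abs] using norm_integral_le_integral_norm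
              (μ := volume.restrict (Ioi (0:ℝ))) (fun y => q x y * (fn' n y - f' y))
        _ = ∫ y in Ioi (0:ℝ), |u y * vn y| := heq
        _ ≤ Cq * Real.sqrt (∫ y in Ioi (0:ℝ), vn y ^ 2) :=
            myCS _ _ _ (hq2 x hx) hvn2
        _ ≤ Cq * wNorm w (fun x => fn n x - f x) (fun x => fn' n x - f' x) := by
            refine mul_le_mul_of_nonneg_left ?_ hCq0
            rw [hint2]
            exact sqrtJ_le_wNorm (g := fun x => fn n x - f x) hw
    have h0 : Tendsto (fun n => c n - L) atTop (nhds 0) := by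
      refine squeeze_zero_norm hbnd ?_
      simpa using hconv.const_mul Cq
    have := h0.add_const L
    simpa using this
  -- claim B : c → h x
  have hB : Tendsto c atTop (nhds (h x)) := by
    have hbnd : ∀ n, ‖c n - h x‖ ≤ (1 + Real.sqrt x) *
        wNorm w (fun x => (∫ y in Ioi (0:ℝ), q x y * fn' n y) - h x)
          (fun x => Tfn' n x - h' x) := by
      intro n
      have hsubHw : MemHw w (fun x' => (∫ y in Ioi (0:ℝ), q x' y * fn' n y) - h x')
          (fun x' => Tfn' n x' - h' x') := (hTfn n).sub hw hh
      simpa [Real.norm_eq_abs] using hsubHw.eval_bound hw hx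
    have h0 : Tendsto (fun n => c n - h x) atTop (nhds 0) := by
      refine squeeze_zero_norm hbnd ?_
      simpa using hconv'.const_mul (1 + Real.sqrt x)
    have := h0.add_const (h x)
    simpa using this
  exact tendsto_nhds_unique hA hB
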